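/- Let Γ be an uncountable set and let A(Γ) = Γ ∪ {∞} be the one-point compactification of Γ equipped with the discrete topology. Then A(Γ) does not admit a closeness function; in particular, it does not admit a B_{M(A(Γ))}-compensation function. -/

import Mathlib

open MeasureTheory

noncomputable section

variable {K : Type*} [TopologicalSpace K] [MeasurableSpace K]

/-- The integral of a function against a signed measure. -/
def sInt (μ : SignedMeasure K) (f : K → ℝ) : ℝ :=
  ∫ x, f x ∂μ.toJordanDecomposition.posPart - ∫ x, f x ∂μ.toJordanDecomposition.negPart

/-- The total variation norm of a signed measure. -/
def mNorm (μ : SignedMeasure K) : ℝ := (μ.totalVariation Set.univ).toReal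

/-- `ν` is a compensation of `μ`: if `μ(K) > 0` then `0 ≤ ν ≤ μ⁺` and `ν(K) = μ(K)`;
if `μ(K) ≤ 0` then `ν = 0`. -/
def IsCompensation (μ ν : SignedMeasure K) : Prop :=
  if 0 < μ Set.univ then
    0 ≤ ν ∧ ν ≤ μ.toJordanDecomposition.posPart.toSignedMeasure ∧ ν Set.univ = μ Set.univ
  else ν = 0

/-- A family of signed measures indexed by a topological space is weak*-continuous. -/
def WStarContinuousFamily {T : Type*} [TopologicalSpace T] (F : T → SignedMeasure K) : Prop :=
  ∀ g : C(K, ℝ), Continuous fun t => sInt (F t) g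

/-- Membership in `W(K)`: a weak*-continuous map from `K` into the closed unit ball of the
space `M(K)` of regular Borel signed measures. -/
def MemW (F : K → SignedMeasure K) : Prop :=
  WStarContinuousFamily F ∧ ∀ t, (F t).totalVariation.Regular ∧ mNorm (F t) ≤ 1

/-- `K` admits local compensation: every element of `W(K)` admits a compensation in `W(K)`. -/
def AdmitsLocalCompensation (K : Type*) [TopologicalSpace K] [MeasurableSpace K] : Prop :=
  ∀ F : K → SignedMeasure K, MemW F →
    ∃ G : K → SignedMeasure K, MemW G ∧ ∀ t, IsCompensation (F t) (G t)

/-- The weak* topology on signed measures. -/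
instance wstarTopology : TopologicalSpace (SignedMeasure K) :=
  TopologicalSpace.induced (fun μ (g : C(K, ℝ)) => sInt μ g) inferInstance

/-- `M(K)`: the regular Borel signed measures on `K`, with the weak* topology. -/
def MK (K : Type*) [TopologicalSpace K] [MeasurableSpace K] : Type _ :=
  {μ : SignedMeasure K // μ.totalVariation.Regular}

instance : TopologicalSpace (MK K) := instTopologicalSpaceSubtype

/-- The closed unit ball `B_{M(K)}` of `M(K)`, with the weak* topology. -/
def BMK (K : Type*) [TopologicalSpace K] [MeasurableSpace K] : Type _ :=
  {μ : SignedMeasure K // μ.totalVariation.Regular ∧ mNorm μ ≤ 1}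

instance : TopologicalSpace (BMK K) := instTopologicalSpaceSubtype

/-- A compensation function on `K`: a weak*-to-weak*-continuous map `ξ : M(K) → M(K)` such
that `ξ μ` is a compensation of `μ` for every `μ ∈ M(K)`. -/
def IsCompensationFunction (ξ : MK K → MK K) : Prop :=
  Continuous ξ ∧ ∀ μ : MK K, IsCompensation μ.1 (ξ μ).1

/-- A `B_{M(K)}`-compensation function on `K`. -/
def IsBallCompensationFunction (ξ : BMK K → MK K) : Prop :=
  Continuous ξ ∧ ∀ μ : BMK K, IsCompensation μ.1 (ξ μ).1

/-- The numerical radius of an operator on a real Banach space. -/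
def NumericalRadius {X : Type*} [NormedAddCommGroup X] [NormedSpace ℝ X] (T : X →L[ℝ] X) : ℝ :=
  sSup {r | ∃ (x : X) (φ : X →L[ℝ] ℝ), ‖x‖ = 1 ∧ ‖φ‖ = 1 ∧ φ x = 1 ∧ r = |φ (T x)|}

/-- The Bishop-Phelps-Bollobás property for numerical radius, witnessed by a
given function `δ`. -/
def HasBPBNumericalRadiusWith (X : Type*) [NormedAddCommGroup X] [NormedSpace ℝ X]
    (δ : ℝ → ℝ) : Prop :=
  ∀ ε : ℝ, 0 < ε → ε < 1 →
    ∀ T : X →L[ℝ] X, NumericalRadius T = 1 →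
      ∀ (x : X) (φ : X →L[ℝ] ℝ), ‖x‖ = 1 → ‖φ‖ = 1 → φ x = 1 →
        1 - δ ε ≤ φ (T x) →
        ∃ (T₀ : X →L[ℝ] X) (x₀ : X) (φ₀ : X →L[ℝ] ℝ),
          NumericalRadius T₀ = 1 ∧ ‖x₀‖ = 1 ∧ ‖φ₀‖ = 1 ∧ φ₀ x₀ = 1 ∧
          φ₀ (T₀ x₀) = 1 ∧ NumericalRadius (T - T₀) ≤ ε ∧ ‖x - x₀‖ ≤ ε ∧ ‖φ - φ₀‖ ≤ ε

/-- The Bishop-Phelps-Bollobás property for numerical radius. -/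
def HasBPBNumericalRadius (X : Type*) [NormedAddCommGroup X] [NormedSpace ℝ X] : Prop :=
  ∃ δ : ℝ → ℝ, (∀ ε : ℝ, 0 < ε → ε < 1 → 0 < δ ε ∧ δ ε < 1) ∧ HasBPBNumericalRadiusWith X δ

/-- A closeness function for `K`: a continuous function `c` on
`{(x,y,z) ∈ K³ : y ≠ z}` with values in `[-1,1]` such that `c(x,y,z) = -c(x,z,y)`
whenever `y ≠ z` and `c(x,x,z) = 1` whenever `x ≠ z`. -/
def IsClosenessFunction (K : Type*) [TopologicalSpace K]
    (c : {p : K × K × K // p.2.1 ≠ p.2.2} → ℝ) : Prop :=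
  Continuous c ∧ (∀ p, c p ∈ Set.Icc (-1 : ℝ) 1) ∧
    (∀ (x y z : K) (h : y ≠ z), c ⟨(x, y, z), h⟩ = -c ⟨(x, z, y), h.symm⟩) ∧
    (∀ (x z : K) (h : x ≠ z), c ⟨(x, x, z), h⟩ = 1)

instance (Γ : Type*) [TopologicalSpace Γ] : MeasurableSpace (OnePoint Γ) :=
  borel (OnePoint Γ)

instance (Γ : Type*) [TopologicalSpace Γ] : BorelSpace (OnePoint Γ) := ⟨rfl⟩

section Auxiliaries

open Set Filter OnePoint

/-- Combinatorial lemma: on an uncountable set, given finite sets `F y`, there is a pair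
`y ≠ z` with `z ∉ F y` and `y ∉ F z`. -/
lemma aux_exists_pair {Γ : Type*} (hΓ : ¬ Countable Γ) (F : Γ → Set Γ)
    (hF : ∀ y, (F y).Finite) : ∃ y z : Γ, y ≠ z ∧ z ∉ F y ∧ y ∉ F z := by
  have hinf : Infinite Γ := by
    by_contra h
    exact hΓ ((not_infinite_iff_finite.mp h).to_countable)
  let f := Infinite.natEmbedding Γ
  have hS : (Set.range f ∪ ⋃ n, F (f n)).Countable :=
    (Set.countable_range f).union (Set.countable_iUnion fun n => (hF _).countable)
  have hz : ∃ z, z ∉ Set.range f ∪ ⋃ n, F (f n) := by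
    by_contra h
    push_neg at h
    exact hΓ (Set.countable_univ_iff.mp (hS.mono fun z _ => h z))
  obtain ⟨z, hz⟩ := hz
  have hz1 : z ∉ Set.range f := fun h => hz (Or.inl h)
  have hz2 : ∀ n, z ∉ F (f n) := fun n h => hz (Or.inr (Set.mem_iUnion.mpr ⟨n, h⟩))
  have hinf2 : ((Set.range f) \ F z).Infinite :=
    (Set.infinite_range_of_injective f.injective).diff (hF z)
  obtain ⟨y, hy⟩ := hinf2.nonempty
  obtain ⟨n, rfl⟩ := hy.1
  exact ⟨f n, z, fun h => hz1 (h ▸ ⟨n, rfl⟩), hz2 n, hy.2⟩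

/-- In the one-point compactification of a discrete space, any neighborhood of `∞`
misses only finitely many points of `Γ`. -/
lemma aux_finite_nhds {Γ : Type*} [TopologicalSpace Γ] [DiscreteTopology Γ]
    {s : Set (OnePoint Γ)} (hs : s ∈ nhds (∞ : OnePoint Γ)) :
    {y : Γ | (y : OnePoint Γ) ∉ s}.Finite := by
  obtain ⟨O, hOs, hO, hmem⟩ := mem_nhds_iff.mp hs
  have hcf : (((↑) ⁻¹' O : Set Γ))ᶜ.Finite :=
    ((OnePoint.isOpen_def.mp hO).1 hmem).finite_of_discrete
  exact hcf.subset fun y hy hy' => hy (hOs hy')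

/-- A finite measure which is concentrated on a finite set is regular. -/
lemma aux_regular {K : Type*} [TopologicalSpace K] [MeasurableSpace K]
    [OpensMeasurableSpace K] [T1Space K] (μ : Measure K) [IsFiniteMeasure μ]
    {S : Set K} (hS : S.Finite) (h0 : μ Sᶜ = 0) : μ.Regular := by
  have houter : ∀ ⦃A : Set K⦄, MeasurableSet A → ∀ r > μ A, ∃ U ⊇ A, IsOpen U ∧ μ U < r := by
    intro A _ r hr
    refine ⟨(S ∩ Aᶜ)ᶜ, fun x hx hx' => hx'.2 hx, ((hS.inter_of_left _).isClosed).isOpen_compl, ?_⟩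
    have hsub : (S ∩ Aᶜ)ᶜ ⊆ A ∪ Sᶜ := by
      intro x hx
      by_cases hxA : x ∈ A
      · exact Or.inl hxA
      · exact Or.inr fun hxS => hx ⟨hxS, hxA⟩
    calc μ (S ∩ Aᶜ)ᶜ ≤ μ (A ∪ Sᶜ) := measure_mono hsub
      _ ≤ μ A + μ Sᶜ := measure_union_le _ _
      _ = μ A := by rw [h0, add_zero]
      _ < r := hr
  have hinner : ∀ ⦃U : Set K⦄, IsOpen U → ∀ r < μ U, ∃ T ⊆ U, IsCompact T ∧ r < μ T := by
    intro U _ r hr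
    refine ⟨S ∩ U, Set.inter_subset_right, (hS.inter_of_left _).isCompact, ?_⟩
    have hsub : U ⊆ (S ∩ U) ∪ Sᶜ := by
      intro x hx
      by_cases hxS : x ∈ S
      · exact Or.inl ⟨hxS, hx⟩
      · exact Or.inr hxS
    have : μ U ≤ μ (S ∩ U) := by
      calc μ U ≤ μ ((S ∩ U) ∪ Sᶜ) := measure_mono hsub
        _ ≤ μ (S ∩ U) + μ Sᶜ := measure_union_le _ _
        _ = μ (S ∩ U) := by rw [h0, add_zero]
    exact lt_of_lt_of_le hr this
  exact { lt_top_of_isCompact := fun _ _ => measure_lt_top μ _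
          outerRegular := houter
          innerRegular := hinner }

/-- Integrating an indicator function against a signed measure gives its value on the set. -/
lemma aux_sInt_indicator {K : Type*} [TopologicalSpace K] [MeasurableSpace K]
    (ν : SignedMeasure K) {A : Set K} (hA : MeasurableSet A) :
    sInt ν (A.indicator 1) = ν A := by
  rw [sInt]
  simp only [integral_indicator_one hA]
  conv_rhs => rw [← SignedMeasure.toSignedMeasure_toJordanDecomposition ν,
    MeasureTheory.JordanDecomposition.toSignedMeasure]
  rw [VectorMeasure.sub_apply, Measure.toSignedMeasure_apply_measurable hA,
    Measure.toSignedMeasure_apply_measurable hA]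

end Auxiliaries

section CompensationAux

open Set Filter OnePoint

variable {Γ : Type*} [TopologicalSpace Γ] [DiscreteTopology Γ]

local notation "K'" => OnePoint Γ

/-- The positive part measure `(1/3)(δ_a + δ_w)`. -/
def auxP (a w : OnePoint Γ) : Measure (OnePoint Γ) :=
  (3⁻¹ : NNReal) • (Measure.dirac a + Measure.dirac w)

/-- The negative part measure `(1/3) δ_∞`. -/
def auxN (Γ : Type*) [TopologicalSpace Γ] : Measure (OnePoint Γ) :=
  (3⁻¹ : NNReal) • Measure.dirac (∞ : OnePoint Γ)

instance (a w : OnePoint Γ) : IsFiniteMeasure (auxP a w) := by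
  unfold auxP; infer_instance

instance : IsFiniteMeasure (auxN Γ) := by
  unfold auxN; infer_instance

/-- The signed measure `(1/3)(δ_a + δ_w − δ_∞)`. -/
def auxMu (a w : OnePoint Γ) : SignedMeasure (OnePoint Γ) :=
  (auxP a w).toSignedMeasure - (auxN Γ).toSignedMeasure

lemma aux_dirac_ne {a : OnePoint Γ} {A : Set (OnePoint Γ)} (h : a ∉ A) :
    Measure.dirac a A = 0 := by
  rw [Measure.dirac_apply, Set.indicator_of_notMem h]

/-- Jordan decomposition of `auxMu a w` when `a, w ≠ ∞`. -/
def auxJ (a w : Γ) : MeasureTheory.JordanDecomposition (OnePoint Γ) where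
  posPart := auxP (a : OnePoint Γ) (w : OnePoint Γ)
  negPart := auxN Γ
  mutuallySingular := by
    refine ⟨{∞}, measurableSet_singleton _, ?_, ?_⟩
    · show auxP _ _ {∞} = 0
      rw [show auxP (a : OnePoint Γ) (w : OnePoint Γ) =
          (3⁻¹ : NNReal) • (Measure.dirac (a : OnePoint Γ) + Measure.dirac (w : OnePoint Γ)) from rfl,
        Measure.smul_apply, Measure.add_apply,
        aux_dirac_ne (by simp [OnePoint.coe_ne_infty]),
        aux_dirac_ne (by simp [OnePoint.coe_ne_infty])]
      simp
    · show auxN Γ {∞}ᶜ = 0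
      rw [show auxN Γ = (3⁻¹ : NNReal) • Measure.dirac (∞ : OnePoint Γ) from rfl,
        Measure.smul_apply, aux_dirac_ne (by simp)]
      simp

lemma aux_toJD_coe (a w : Γ) :
    (auxMu (a : OnePoint Γ) (w : OnePoint Γ)).toJordanDecomposition = auxJ a w := by
  have : (auxJ a w).toSignedMeasure = auxMu (a : OnePoint Γ) (w : OnePoint Γ) := rfl
  rw [← this, MeasureTheory.JordanDecomposition.toJordanDecomposition_toSignedMeasure]

/-- Jordan decomposition of `auxMu a ∞`. -/
def auxJinf (a : Γ) : MeasureTheory.JordanDecomposition (OnePoint Γ) where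
  posPart := (3⁻¹ : NNReal) • Measure.dirac (a : OnePoint Γ)
  negPart := 0
  mutuallySingular := MeasureTheory.Measure.MutuallySingular.zero_right

lemma aux_mu_inf (a : Γ) :
    auxMu (a : OnePoint Γ) (∞ : OnePoint Γ) =
      ((3⁻¹ : NNReal) • Measure.dirac (a : OnePoint Γ)).toSignedMeasure := by
  have h1 : auxMu (a : OnePoint Γ) ∞ =
      ((3⁻¹ : NNReal) • (Measure.dirac (a : OnePoint Γ) +
        Measure.dirac (∞ : OnePoint Γ))).toSignedMeasure -
      ((3⁻¹ : NNReal) • Measure.dirac (∞ : OnePoint Γ)).toSignedMeasure := rfl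
  rw [h1]
  ext i hi
  rw [VectorMeasure.sub_apply, Measure.toSignedMeasure_apply_measurable hi,
    Measure.toSignedMeasure_apply_measurable hi, Measure.toSignedMeasure_apply_measurable hi]
  simp only [Measure.real]
  simp only [Measure.smul_apply, Measure.add_apply, ENNReal.smul_def, smul_eq_mul, mul_add]
  rw [ENNReal.toReal_add (by finiteness) (by finiteness)]
  ring

lemma aux_toJD_inf (a : Γ) :
    (auxMu (a : OnePoint Γ) (∞ : OnePoint Γ)).toJordanDecomposition = auxJinf a := by
  have : (auxJinf a).toSignedMeasure = auxMu (a : OnePoint Γ) (∞ : OnePoint Γ) := by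
    rw [MeasureTheory.JordanDecomposition.toSignedMeasure, aux_mu_inf]
    show ((3⁻¹ : NNReal) • Measure.dirac (a : OnePoint Γ)).toSignedMeasure -
      (0 : Measure (OnePoint Γ)).toSignedMeasure = _
    rw [Measure.toSignedMeasure_zero, sub_zero]
  rw [← this, MeasureTheory.JordanDecomposition.toJordanDecomposition_toSignedMeasure]

lemma aux_mu_comm (a b : Γ) :
    auxMu (a : OnePoint Γ) (b : OnePoint Γ) = auxMu (b : OnePoint Γ) (a : OnePoint Γ) := by
  ext i hi
  have h1 : auxMu (a : OnePoint Γ) (b : OnePoint Γ) =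
      (auxP (a : OnePoint Γ) (b : OnePoint Γ)).toSignedMeasure - (auxN Γ).toSignedMeasure := rfl
  have h2 : auxMu (b : OnePoint Γ) (a : OnePoint Γ) =
      (auxP (b : OnePoint Γ) (a : OnePoint Γ)).toSignedMeasure - (auxN Γ).toSignedMeasure := rfl
  rw [h1, h2]
  simp only [VectorMeasure.sub_apply, Measure.toSignedMeasure_apply_measurable hi]
  have hPP : auxP (a : OnePoint Γ) (b : OnePoint Γ) i = auxP (b : OnePoint Γ) (a : OnePoint Γ) i := by
    show ((3⁻¹ : NNReal) • (Measure.dirac (a : OnePoint Γ) + Measure.dirac (b : OnePoint Γ))) i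
      = ((3⁻¹ : NNReal) • (Measure.dirac (b : OnePoint Γ) + Measure.dirac (a : OnePoint Γ))) i
    simp [Measure.smul_apply, Measure.add_apply, add_comm]
  simp only [Measure.real]
  rw [hPP]

lemma aux_integrable_dirac (g : C(OnePoint Γ, ℝ)) (x : OnePoint Γ) :
    Integrable (⇑g) (Measure.dirac x) :=
  (integrable_congr (MeasureTheory.ae_eq_dirac ⇑g)).mpr (integrable_const _)

lemma aux_integral_P (a w : OnePoint Γ) (g : C(OnePoint Γ, ℝ)) :
    ∫ x, g x ∂(auxP a w) = 3⁻¹ * g a + 3⁻¹ * g w := by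
  rw [show auxP a w = (3⁻¹ : NNReal) • (Measure.dirac a + Measure.dirac w) from rfl,
    integral_smul_nnreal_measure,
    integral_add_measure (aux_integrable_dirac g a) (aux_integrable_dirac g w),
    integral_dirac, integral_dirac]
  rw [NNReal.smul_def, smul_eq_mul]
  norm_num
  ring

lemma aux_integral_N (g : C(OnePoint Γ, ℝ)) :
    ∫ x, g x ∂(auxN Γ) = 3⁻¹ * g ∞ := by
  rw [show auxN Γ = (3⁻¹ : NNReal) • Measure.dirac (∞ : OnePoint Γ) from rfl,
    integral_smul_nnreal_measure, integral_dirac]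
  rw [NNReal.smul_def, smul_eq_mul]
  norm_num

lemma aux_sInt_mu (a : Γ) (w : OnePoint Γ) (g : C(OnePoint Γ, ℝ)) :
    sInt (auxMu (a : OnePoint Γ) w) ⇑g = 3⁻¹ * g ↑a + 3⁻¹ * g w - 3⁻¹ * g ∞ := by
  cases w with
  | infty =>
    rw [sInt, aux_toJD_inf]
    show (∫ x, g x ∂((3⁻¹ : NNReal) • Measure.dirac ((a : OnePoint Γ)))) -
      ∫ x, g x ∂(0 : Measure (OnePoint Γ)) = _
    rw [integral_zero_measure, integral_smul_nnreal_measure, integral_dirac,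
      NNReal.smul_def, smul_eq_mul]
    norm_num
  | coe b =>
    rw [sInt, aux_toJD_coe]
    show (∫ x, g x ∂(auxP (a : OnePoint Γ) (b : OnePoint Γ))) - ∫ x, g x ∂(auxN Γ) = _
    rw [aux_integral_P, aux_integral_N]

lemma aux_P_univ_toReal (a w : OnePoint Γ) : ((auxP a w) Set.univ).toReal = 2/3 := by
  rw [show auxP a w = (3⁻¹ : NNReal) • (Measure.dirac a + Measure.dirac w) from rfl]
  simp [Measure.smul_apply, Measure.add_apply, ENNReal.smul_def, ENNReal.toReal_mul]
  rw [ENNReal.toReal_add (by simp) (by simp)]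
  simp [ENNReal.toReal_inv]
  norm_num

lemma aux_N_univ_toReal : ((auxN Γ) Set.univ).toReal = 1/3 := by
  rw [show auxN Γ = (3⁻¹ : NNReal) • Measure.dirac (∞ : OnePoint Γ) from rfl]
  simp [Measure.smul_apply, ENNReal.smul_def, ENNReal.toReal_mul]

lemma aux_mu_univ (a : Γ) (w : OnePoint Γ) :
    auxMu (a : OnePoint Γ) w Set.univ = 3⁻¹ := by
  rw [show auxMu (a : OnePoint Γ) w =
      (auxP (a : OnePoint Γ) w).toSignedMeasure - (auxN Γ).toSignedMeasure from rfl,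
    VectorMeasure.sub_apply, Measure.toSignedMeasure_apply_measurable MeasurableSet.univ,
    Measure.toSignedMeasure_apply_measurable MeasurableSet.univ]
  simp only [Measure.real]
  rw [aux_P_univ_toReal, aux_N_univ_toReal]
  norm_num

lemma aux_tv_coe (a b : Γ) :
    (auxMu (a : OnePoint Γ) (b : OnePoint Γ)).totalVariation =
      auxP (a : OnePoint Γ) (b : OnePoint Γ) + auxN Γ := by
  have h : (auxMu (a : OnePoint Γ) (b : OnePoint Γ)).totalVariation =
      (auxMu (a : OnePoint Γ) (b : OnePoint Γ)).toJordanDecomposition.posPart +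
        (auxMu (a : OnePoint Γ) (b : OnePoint Γ)).toJordanDecomposition.negPart := rfl
  rw [h, aux_toJD_coe]
  rfl

lemma aux_tv_inf (a : Γ) :
    (auxMu (a : OnePoint Γ) (∞ : OnePoint Γ)).totalVariation =
      (3⁻¹ : NNReal) • Measure.dirac (a : OnePoint Γ) := by
  have h : (auxMu (a : OnePoint Γ) (∞ : OnePoint Γ)).totalVariation =
      (auxMu (a : OnePoint Γ) (∞ : OnePoint Γ)).toJordanDecomposition.posPart +
        (auxMu (a : OnePoint Γ) (∞ : OnePoint Γ)).toJordanDecomposition.negPart := rfl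
  rw [h, aux_toJD_inf]
  show (3⁻¹ : NNReal) • Measure.dirac (a : OnePoint Γ) + 0 = _
  rw [add_zero]

lemma aux_mem_BMK (a : Γ) (w : OnePoint Γ) :
    (auxMu (a : OnePoint Γ) w).totalVariation.Regular ∧ mNorm (auxMu (a : OnePoint Γ) w) ≤ 1 := by
  cases w with
  | infty =>
    rw [mNorm, aux_tv_inf]
    constructor
    · refine aux_regular _ (Set.finite_singleton ((a : OnePoint Γ))) ?_
      rw [Measure.smul_apply, aux_dirac_ne (by simp)]
      simp
    · rw [Measure.smul_apply, ENNReal.smul_def, smul_eq_mul, ENNReal.toReal_mul]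
      simp
      norm_num
  | coe b =>
    rw [mNorm, aux_tv_coe]
    constructor
    · refine aux_regular _ (((Set.finite_singleton (∞ : OnePoint Γ)).insert
        ((b : OnePoint Γ))).insert ((a : OnePoint Γ))) ?_
      rw [Measure.add_apply,
        show auxP (a : OnePoint Γ) (b : OnePoint Γ) =
          (3⁻¹ : NNReal) • (Measure.dirac (a : OnePoint Γ) + Measure.dirac (b : OnePoint Γ))
          from rfl,
        show auxN Γ = (3⁻¹ : NNReal) • Measure.dirac (∞ : OnePoint Γ) from rfl,
        Measure.smul_apply, Measure.smul_apply, Measure.add_apply,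
        aux_dirac_ne (by simp), aux_dirac_ne (by simp), aux_dirac_ne (by simp)]
      simp
    · rw [Measure.add_apply, ENNReal.toReal_add (measure_ne_top _ _) (measure_ne_top _ _),
        aux_P_univ_toReal]
      have := aux_N_univ_toReal (Γ := Γ)
      rw [this]
      norm_num

/-- The indicator function of `{a}` as a continuous map. -/
def auxG (a : Γ) : C(OnePoint Γ, ℝ) :=
  ⟨Set.indicator {(a : OnePoint Γ)} 1, by
    have hclopen : IsClopen {(a : OnePoint Γ)} := by
      constructor
      · exact isClosed_singleton
      · have h := (OnePoint.isOpen_image_coe (X := Γ) (s := {a})).mpr (isOpen_discrete _)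
        rwa [Set.image_singleton] at h
    exact continuous_indicator (by simp [hclopen]) continuous_const.continuousOn⟩

lemma aux_nonneg_apply {ν : SignedMeasure (OnePoint Γ)} (h : 0 ≤ ν) {A : Set (OnePoint Γ)}
    (hA : MeasurableSet A) : 0 ≤ ν A := by
  have := (VectorMeasure.le_iff.mp h) A hA
  simpa using this

lemma aux_comp_unpack (a : Γ) (w : OnePoint Γ) {ν : SignedMeasure (OnePoint Γ)}
    (h : IsCompensation (auxMu (a : OnePoint Γ) w) ν) :
    0 ≤ ν ∧ ν ≤ (auxMu (a : OnePoint Γ) w).toJordanDecomposition.posPart.toSignedMeasure ∧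
      ν Set.univ = 3⁻¹ := by
  rw [IsCompensation, if_pos (by rw [aux_mu_univ]; norm_num)] at h
  exact ⟨h.1, h.2.1, by rw [h.2.2, aux_mu_univ]⟩

lemma aux_value_inf (a : Γ) {ν : SignedMeasure (OnePoint Γ)}
    (h : IsCompensation (auxMu (a : OnePoint Γ) (∞ : OnePoint Γ)) ν) :
    ν {(a : OnePoint Γ)} = 3⁻¹ := by
  obtain ⟨h0, hle, huniv⟩ := aux_comp_unpack a ∞ h
  rw [aux_toJD_inf] at hle
  have hupper : ν {(a : OnePoint Γ)}ᶜ ≤ 0 := by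
    have h1 := (VectorMeasure.le_iff.mp hle) {(a : OnePoint Γ)}ᶜ
      (measurableSet_singleton _).compl
    have h2 : (auxJinf a).posPart.toSignedMeasure {(a : OnePoint Γ)}ᶜ = 0 := by
      rw [Measure.toSignedMeasure_apply_measurable (measurableSet_singleton _).compl]
      show (((3⁻¹ : NNReal) • Measure.dirac ((a : OnePoint Γ))) {(a : OnePoint Γ)}ᶜ).toReal = 0
      rw [Measure.smul_apply, aux_dirac_ne (by simp)]
      simp
    rw [h2] at h1
    exact h1
  have hzero : ν {(a : OnePoint Γ)}ᶜ = 0 :=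
    le_antisymm hupper (aux_nonneg_apply h0 (measurableSet_singleton _).compl)
  have hsplit : ν Set.univ = ν {(a : OnePoint Γ)} + ν {(a : OnePoint Γ)}ᶜ := by
    rw [← VectorMeasure.of_union disjoint_compl_right (measurableSet_singleton _)
      (measurableSet_singleton _).compl, Set.union_compl_self]
  rw [huniv, hzero, add_zero] at hsplit
  exact hsplit.symm

lemma aux_sum_le {a b : Γ} (hab : a ≠ b) {ν : SignedMeasure (OnePoint Γ)} (h0 : 0 ≤ ν)
    (huniv : ν Set.univ = 3⁻¹) :
    ν {(a : OnePoint Γ)} + ν {(b : OnePoint Γ)} ≤ 3⁻¹ := by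
  have hd : Disjoint ({(a : OnePoint Γ)} : Set (OnePoint Γ)) {(b : OnePoint Γ)} :=
    Set.disjoint_singleton.mpr fun h => hab (OnePoint.coe_eq_coe.mp h)
  have h1 : ν ({(a : OnePoint Γ)} ∪ {(b : OnePoint Γ)}) =
      ν {(a : OnePoint Γ)} + ν {(b : OnePoint Γ)} :=
    VectorMeasure.of_union hd (measurableSet_singleton _) (measurableSet_singleton _)
  have hmeas : MeasurableSet ({(a : OnePoint Γ)} ∪ {(b : OnePoint Γ)}) :=
    (measurableSet_singleton _).union (measurableSet_singleton _)
  have h2 : ν Set.univ = ν ({(a : OnePoint Γ)} ∪ {(b : OnePoint Γ)}) +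
      ν ({(a : OnePoint Γ)} ∪ {(b : OnePoint Γ)})ᶜ := by
    rw [← VectorMeasure.of_union disjoint_compl_right hmeas hmeas.compl, Set.union_compl_self]
  have h3 : 0 ≤ ν ({(a : OnePoint Γ)} ∪ {(b : OnePoint Γ)})ᶜ :=
    aux_nonneg_apply h0 hmeas.compl
  rw [huniv, h1] at h2
  linarith

lemma aux_cont_eval (g : C(OnePoint Γ, ℝ)) :
    Continuous (fun ν : MK (OnePoint Γ) => sInt ν.1 ⇑g) := by
  have h1 : Continuous (fun μ : SignedMeasure (OnePoint Γ) =>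
      (fun g' : C(OnePoint Γ, ℝ) => sInt μ ⇑g')) := continuous_induced_dom
  exact ((continuous_apply g).comp h1).comp continuous_subtype_val

lemma aux_cont_mu (a : Γ) : Continuous (fun w : OnePoint Γ => auxMu (a : OnePoint Γ) w) := by
  have key : ∀ g : C(OnePoint Γ, ℝ),
      Continuous fun w : OnePoint Γ => sInt (auxMu (a : OnePoint Γ) w) ⇑g := by
    intro g
    have heq : (fun w : OnePoint Γ => sInt (auxMu (a : OnePoint Γ) w) ⇑g) =
        fun w => 3⁻¹ * g ↑a + 3⁻¹ * g w - 3⁻¹ * g ∞ := funext fun w => aux_sInt_mu a w g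
    rw [heq]
    fun_prop
  exact continuous_induced_rng.mpr (continuous_pi key)

end CompensationAux

open scoped OnePoint in
/-- If `Γ` is uncountable, then the one-point compactification `A(Γ)` of the
discrete space `Γ` admits no closeness function; in particular it admits no
`B_{M(A(Γ))}`-compensation function. -/
theorem stmt17 (Γ : Type*) [TopologicalSpace Γ] [DiscreteTopology Γ]
    (hΓ : ¬ Countable Γ) :
    (¬ ∃ c : {p : OnePoint Γ × OnePoint Γ × OnePoint Γ // p.2.1 ≠ p.2.2} → ℝ,
        IsClosenessFunction (OnePoint Γ) c) ∧
      ¬ ∃ ξ : BMK (OnePoint Γ) → MK (OnePoint Γ), IsBallCompensationFunction ξ := by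
  constructor
  · rintro ⟨c, hcont, -, hanti, hone⟩
    have key : ∀ z : Γ, ∃ F : Set Γ, F.Finite ∧ ∀ y : Γ, y ∉ F →
        ∀ h : ((y : OnePoint Γ)) ≠ ((z : OnePoint Γ)),
          1/2 < c ⟨((∞ : OnePoint Γ), (y : OnePoint Γ), (z : OnePoint Γ)), h⟩ := by
      intro z
      have hne : (∞ : OnePoint Γ) ≠ (z : OnePoint Γ) := OnePoint.infty_ne_coe z
      have hval : c ⟨((∞ : OnePoint Γ), (∞ : OnePoint Γ), (z : OnePoint Γ)), hne⟩ = 1 :=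
        hone ∞ ↑z hne
      have hopen : IsOpen (c ⁻¹' Set.Ioi (1/2 : ℝ)) := isOpen_Ioi.preimage hcont
      obtain ⟨U, hU, hUeq⟩ := isOpen_induced_iff.mp hopen
      have hpU : (((∞ : OnePoint Γ), (∞ : OnePoint Γ), (z : OnePoint Γ)) :
          OnePoint Γ × OnePoint Γ × OnePoint Γ) ∈ U := by
        have hmem : (⟨((∞ : OnePoint Γ), (∞ : OnePoint Γ), (z : OnePoint Γ)), hne⟩ :
            {p : OnePoint Γ × OnePoint Γ × OnePoint Γ // p.2.1 ≠ p.2.2}) ∈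
            c ⁻¹' Set.Ioi (1/2 : ℝ) := by
          simp only [Set.mem_preimage, Set.mem_Ioi, hval]
          norm_num
        rw [← hUeq] at hmem
        exact hmem
      have hUnhds : U ∈ nhds (((∞ : OnePoint Γ), (∞ : OnePoint Γ), (z : OnePoint Γ)) :
          OnePoint Γ × OnePoint Γ × OnePoint Γ) := hU.mem_nhds hpU
      rw [nhds_prod_eq, nhds_prod_eq] at hUnhds
      obtain ⟨A, hA, BC, hBC, hsub⟩ := Filter.mem_prod_iff.mp hUnhds
      obtain ⟨B, hB, C, hC, hsub2⟩ := Filter.mem_prod_iff.mp hBC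
      refine ⟨{y : Γ | (y : OnePoint Γ) ∉ B}, aux_finite_nhds hB, ?_⟩
      intro y hy h
      have hyB : (y : OnePoint Γ) ∈ B := not_not.mp hy
      have hmemU : (((∞ : OnePoint Γ), (y : OnePoint Γ), (z : OnePoint Γ)) :
          OnePoint Γ × OnePoint Γ × OnePoint Γ) ∈ U :=
        hsub (Set.mk_mem_prod (mem_of_mem_nhds hA)
          (hsub2 (Set.mk_mem_prod hyB (mem_of_mem_nhds hC))))
      have hfin : (⟨((∞ : OnePoint Γ), (y : OnePoint Γ), (z : OnePoint Γ)), h⟩ :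
          {p : OnePoint Γ × OnePoint Γ × OnePoint Γ // p.2.1 ≠ p.2.2}) ∈
          c ⁻¹' Set.Ioi (1/2 : ℝ) := by
        rw [← hUeq]
        exact hmemU
      simpa using hfin
    choose F hFfin hFval using key
    obtain ⟨y, z, hyz, hzF, hyF⟩ := aux_exists_pair hΓ F hFfin
    have hne1 : ((y : OnePoint Γ)) ≠ ((z : OnePoint Γ)) :=
      fun h => hyz (OnePoint.coe_eq_coe.mp h)
    have h1 := hFval z y hyF hne1
    have h2 := hFval y z hzF hne1.symm
    have h3 := hanti ∞ ↑y ↑z hne1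
    rw [h3] at h1
    linarith
  · rintro ⟨ξ, hξc, hξcomp⟩
    have hmem := fun (a : Γ) (w : OnePoint Γ) => aux_mem_BMK a w
    let Φ : Γ → OnePoint Γ → BMK (OnePoint Γ) := fun a w => ⟨auxMu (↑a) w, hmem a w⟩
    have hΦcont : ∀ a : Γ, Continuous (Φ a) := fun a =>
      Continuous.subtype_mk (aux_cont_mu a) _
    have hH : ∀ a : Γ, Continuous fun w => sInt ((ξ (Φ a w)).1) ⇑(auxG a) := fun a =>
      (aux_cont_eval (auxG a)).comp (hξc.comp (hΦcont a))
    have hval2 : ∀ (a : Γ) (ν : SignedMeasure (OnePoint Γ)),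
        sInt ν ⇑(auxG a) = ν {(a : OnePoint Γ)} := fun a ν =>
      aux_sInt_indicator ν (measurableSet_singleton _)
    have hinfty : ∀ a : Γ, sInt ((ξ (Φ a ∞)).1) ⇑(auxG a) = 3⁻¹ := fun a => by
      rw [hval2 a]
      exact aux_value_inf a (hξcomp (Φ a ∞))
    have key : ∀ a : Γ, ∃ F : Set Γ, F.Finite ∧ ∀ z : Γ, z ∉ F →
        (1/4 : ℝ) < sInt ((ξ (Φ a ↑z)).1) ⇑(auxG a) := by
      intro a
      have hnb : (fun w => sInt ((ξ (Φ a w)).1) ⇑(auxG a)) ⁻¹' Set.Ioi (1/4 : ℝ) ∈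
          nhds (∞ : OnePoint Γ) := by
        refine (isOpen_Ioi.preimage (hH a)).mem_nhds ?_
        simp only [Set.mem_preimage, Set.mem_Ioi, hinfty a]
        norm_num
      refine ⟨_, aux_finite_nhds hnb, fun z hz => ?_⟩
      have hz' := not_not.mp hz
      simpa using hz'
    choose F hFfin hFval using key
    obtain ⟨a, b, hab, hbF, haF⟩ := aux_exists_pair hΓ F hFfin
    have h1 := hFval a b hbF
    have h2 := hFval b a haF
    have hΦsymm : Φ a ↑b = Φ b ↑a := Subtype.ext (aux_mu_comm a b)
    rw [hΦsymm, hval2 a] at h1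
    rw [hval2 b] at h2
    obtain ⟨h0, -, huniv⟩ := aux_comp_unpack b ↑a (hξcomp (Φ b ↑a))
    have hsum := aux_sum_le hab.symm h0 huniv
    have h13 : (3 : ℝ)⁻¹ < 1/2 := by norm_num
    linarith

end
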